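/- Let ξ_1, ξ_2, … be i.i.d. with ℙ{ξ = 1} = p_1 > 0 and distribution (p_k) on ℕ. Fix n ≥ 2 and define R_0 = 0, R_k = R_{k-1} + ξ_k·1{R_{k-1}+ξ_k < n}, and let M_n be the number of k with R_{k-1} ≠ R_k. Then M_1 = 0 and for n ≥ 2 the distribution of M_n satisfies M_n =_d M_{n - I_n} + 1, where ℙ{I_n = k} = p_k/(p_1 + ⋯ + p_{n-1}) for 1 ≤ k ≤ n-1 and I_n is independent of M_2, …, M_{n-1}. -/

import Mathlib

open MeasureTheory ProbabilityTheory

/-- The walk truncated to stay below level `m`: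
`R_0 = 0`, `R_{k+1} = R_k + x_k·1{R_k + x_k < m}`. -/
def truncWalk (x : ℕ → ℕ) (m : ℕ) : ℕ → ℕ
  | 0 => 0
  | k + 1 => truncWalk x m k + if truncWalk x m k + x k < m then x k else 0

/-- The number of jumps of the truncated walk. -/
noncomputable def jumps (x : ℕ → ℕ) (m : ℕ) : ℕ :=
  {l : ℕ | truncWalk x m l ≠ truncWalk x m (l + 1)}.ncard

lemma truncWalk_lt (x : ℕ → ℕ) (m : ℕ) (hm : 1 ≤ m) : ∀ l, truncWalk x m l < m := by
  intro l
  induction l with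
  | zero => simp [truncWalk]; omega
  | succ k ih =>
    rw [truncWalk]
    split <;> omega

lemma truncWalk_mono (x : ℕ → ℕ) (m : ℕ) : Monotone (truncWalk x m) := by
  apply monotone_nat_of_le_succ
  intro l
  rw [truncWalk]
  omega

lemma jumpSet_finite (x : ℕ → ℕ) (m : ℕ) :
    {l : ℕ | truncWalk x m l ≠ truncWalk x m (l + 1)}.Finite := by
  rcases Nat.eq_zero_or_pos m with hm | hm
  · convert Set.finite_empty
    ext l
    simp only [Set.mem_setOf_eq, Set.mem_empty_iff_false, iff_false, not_not]
    subst hm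
    rw [truncWalk]
    simp
  · apply Set.Finite.of_finite_image (f := fun l => truncWalk x m (l + 1))
    · apply (Set.finite_Iio m).subset
      rintro _ ⟨l, hl, rfl⟩
      exact truncWalk_lt x m hm _
    · have key : ∀ a ∈ {l | truncWalk x m l ≠ truncWalk x m (l + 1)},
          ∀ b ∈ {l | truncWalk x m l ≠ truncWalk x m (l + 1)}, a < b →
          truncWalk x m (a + 1) < truncWalk x m (b + 1) := by
        intro a _ b hb hab
        have h1 : truncWalk x m (a + 1) ≤ truncWalk x m b := truncWalk_mono x m (by omega)
        have h2 : truncWalk x m b ≤ truncWalk x m (b + 1) := truncWalk_mono x m (by omega)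
        simp only [Set.mem_setOf_eq] at hb
        omega
      intro a ha b hb hab
      by_contra hne
      rcases Nat.lt_or_ge a b with h | h
      · exact absurd hab (Nat.ne_of_lt (key a ha b hb h))
      · have : b < a := by omega
        exact absurd hab.symm (Nat.ne_of_lt (key b hb a ha this))

lemma jumps_le_one (x : ℕ → ℕ) (m : ℕ) (hpos : ∀ l, 1 ≤ x l) (hm : m ≤ 1) :
    jumps x m = 0 := by
  have hR : ∀ l, truncWalk x m l = 0 := by
    intro l
    induction l with
    | zero => rfl
    | succ k ih =>
      rw [truncWalk, ih]
      have := hpos k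
      simp only [Nat.zero_add]
      rw [if_neg (by omega)]
  unfold jumps
  convert Set.ncard_empty ℕ
  ext l
  simp [hR]

lemma truncWalk_head_lt (x : ℕ → ℕ) (m : ℕ) (h : x 0 < m) :
    ∀ l, truncWalk x m (l + 1) = x 0 + truncWalk (fun i => x (i + 1)) (m - x 0) l := by
  intro l
  induction l with
  | zero =>
    simp [truncWalk, h]
  | succ k ih =>
    rw [truncWalk, ih, truncWalk]
    have hcond : (x 0 + truncWalk (fun i => x (i + 1)) (m - x 0) k + x (k + 1) < m)
        ↔ (truncWalk (fun i => x (i + 1)) (m - x 0) k + x (k + 1) < m - x 0) := by omega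
    by_cases hc : truncWalk (fun i => x (i + 1)) (m - x 0) k + x (k + 1) < m - x 0
    · rw [if_pos (hcond.2 hc), if_pos hc]; omega
    · rw [if_neg (fun hh => hc (hcond.1 hh)), if_neg hc]
      omega

lemma jumps_head_lt (x : ℕ → ℕ) (m : ℕ) (hpos : ∀ l, 1 ≤ x l) (h : x 0 < m) :
    jumps x m = jumps (fun i => x (i + 1)) (m - x 0) + 1 := by
  unfold jumps
  have hset : {l : ℕ | truncWalk x m l ≠ truncWalk x m (l + 1)}
      = insert 0 ((fun l => l + 1) '' {l : ℕ | truncWalk (fun i => x (i + 1)) (m - x 0) l ≠ truncWalk (fun i => x (i + 1)) (m - x 0) (l + 1)}) := by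
    ext l
    cases l with
    | zero =>
      simp only [Set.mem_setOf_eq, Set.mem_insert_iff, true_or, iff_true]
      rw [truncWalk_head_lt x m h 0]
      have := hpos 0
      simp [truncWalk]
      omega
    | succ k =>
      simp only [Set.mem_setOf_eq, Set.mem_insert_iff, Set.mem_image]
      rw [truncWalk_head_lt x m h k, truncWalk_head_lt x m h (k + 1)]
      constructor
      · intro hne
        right
        exact ⟨k, by intro hh; exact hne (by rw [hh]), rfl⟩
      · rintro (hh | ⟨a, ha, hak⟩)
        · omega
        · have : a = k := by omega
          subst this
          intro hh
          omega
  rw [hset, Set.ncard_insert_of_notMem (by simp) ((jumpSet_finite (fun i => x (i + 1)) (m - x 0)).image _),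
    Set.ncard_image_of_injective _ (by intro a b h; simpa using h)]

lemma truncWalk_head_ge (x : ℕ → ℕ) (m : ℕ) (h : ¬ x 0 < m) :
    ∀ l, truncWalk x m (l + 1) = truncWalk (fun i => x (i + 1)) m l := by
  intro l
  induction l with
  | zero =>
    simp [truncWalk, h]
  | succ k ih =>
    rw [truncWalk, ih, truncWalk]

lemma jumps_head_ge (x : ℕ → ℕ) (m : ℕ) (h : ¬ x 0 < m) :
    jumps x m = jumps (fun i => x (i + 1)) m := by
  unfold jumps
  have hset : {l : ℕ | truncWalk x m l ≠ truncWalk x m (l + 1)}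
      = (fun l => l + 1) '' {l : ℕ | truncWalk (fun i => x (i + 1)) m l ≠ truncWalk (fun i => x (i + 1)) m (l + 1)} := by
    ext l
    cases l with
    | zero =>
      simp only [Set.mem_setOf_eq, Set.mem_image]
      rw [truncWalk_head_ge x m h 0]
      constructor
      · intro hne
        exfalso
        apply hne
        simp only [truncWalk]
      · rintro ⟨a, _, hak⟩; omega
    | succ k =>
      simp only [Set.mem_setOf_eq, Set.mem_image]
      rw [truncWalk_head_ge x m h k, truncWalk_head_ge x m h (k + 1)]
      constructor
      · intro hne
        exact ⟨k, hne, rfl⟩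
      · rintro ⟨a, ha, hak⟩
        have : a = k := by omega
        subst this
        exact ha
  rw [hset, Set.ncard_image_of_injective _ (by intro a b h; simpa using h)]

lemma jumps_eq_zero_ge (x : ℕ → ℕ) (m : ℕ) (hpos : ∀ l, 1 ≤ x l) (hm : 2 ≤ m)
    (h : jumps x m = 0) : ∀ l, m ≤ x l := by
  intro l
  induction l generalizing x with
  | zero =>
    by_contra hlt
    rw [jumps_head_lt x m hpos (by omega)] at h
    omega
  | succ k ih =>
    have h0 : ¬ x 0 < m := by
      intro hlt
      rw [jumps_head_lt x m hpos (by omega)] at h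
      omega
    rw [jumps_head_ge x m h0] at h
    exact ih (fun i => x (i + 1)) (fun i => hpos (i + 1)) h

/-- count of jumps among the first `M` steps -/
def jumpCount (m M : ℕ) (x : ℕ → ℕ) : ℕ :=
  ((Finset.range M).filter (fun l => truncWalk x m l ≠ truncWalk x m (l + 1))).card

lemma jumps_eq_iff (x : ℕ → ℕ) (m j : ℕ) :
    jumps x m = j ↔ ∃ N, ∀ M, N ≤ M → jumpCount m M x = j := by
  obtain ⟨F, hF⟩ : ∃ F : Finset ℕ, ↑F = {l : ℕ | truncWalk x m l ≠ truncWalk x m (l + 1)} :=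
    ⟨(jumpSet_finite x m).toFinset, (jumpSet_finite x m).coe_toFinset⟩
  have hkey : ∀ M, (∀ l ∈ F, l < M) → jumpCount m M x = jumps x m := by
    intro M hM
    unfold jumpCount jumps
    rw [← hF, Set.ncard_coe_finset]
    congr 1
    ext l
    simp only [Finset.mem_filter, Finset.mem_range]
    constructor
    · intro ⟨_, h2⟩
      have : l ∈ (F : Set ℕ) := by rw [hF]; exact h2
      exact this
    · intro hl
      have hl' : l ∈ (F : Set ℕ) := hl
      rw [hF] at hl'
      exact ⟨hM l hl, hl'⟩
  constructor
  · intro h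
    obtain ⟨N, hN⟩ : ∃ N, ∀ l ∈ F, l < N := by
      rcases F.exists_le with ⟨N', hN'⟩
      exact ⟨N' + 1, fun l hl => by have := hN' l hl; omega⟩
    exact ⟨N, fun M hM => by rw [hkey M (fun l hl => lt_of_lt_of_le (hN l hl) hM)]; exact h⟩
  · rintro ⟨N, hN⟩
    obtain ⟨N', hN'⟩ : ∃ N', ∀ l ∈ F, l < N' := by
      rcases F.exists_le with ⟨N'', hN''⟩
      exact ⟨N'' + 1, fun l hl => by have := hN'' l hl; omega⟩
    rw [← hkey (max N N') (fun l hl => lt_of_lt_of_le (hN' l hl) (le_max_right _ _))]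
    exact hN _ (le_max_left _ _)

lemma measurable_truncWalk (m l : ℕ) : Measurable (fun x : ℕ → ℕ => truncWalk x m l) := by
  induction l with
  | zero => simpa [truncWalk] using measurable_const
  | succ k ih =>
    simp only [truncWalk]
    apply ih.add
    have hs : MeasurableSet {x : ℕ → ℕ | truncWalk x m k + x k < m} := by
      have : Measurable (fun x : ℕ → ℕ => truncWalk x m k + x k) :=
        ih.add (measurable_pi_apply k)
      exact this (MeasurableSet.of_discrete (s := {t : ℕ | t < m}))
    exact Measurable.ite hs (measurable_pi_apply k) measurable_const

lemma measurable_jumpCount (m M : ℕ) : Measurable (jumpCount m M) := by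
  unfold jumpCount
  have : ∀ x : ℕ → ℕ, ((Finset.range M).filter (fun l => truncWalk x m l ≠ truncWalk x m (l + 1))).card
      = ∑ l ∈ Finset.range M, if truncWalk x m l ≠ truncWalk x m (l + 1) then 1 else 0 := by
    intro x
    rw [Finset.card_filter]
  simp only [this]
  apply Finset.measurable_sum
  intro l _
  have hs : MeasurableSet {x : ℕ → ℕ | truncWalk x m l ≠ truncWalk x m (l + 1)} := by
    have h1 : Measurable (fun x : ℕ → ℕ => (truncWalk x m l, truncWalk x m (l + 1))) :=
      (measurable_truncWalk m l).prodMk (measurable_truncWalk m (l + 1))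
    exact h1 (MeasurableSet.of_discrete (s := {t : ℕ × ℕ | t.1 ≠ t.2}))
  exact Measurable.ite hs measurable_const measurable_const

lemma measurableSet_jumps_eq (m j : ℕ) : MeasurableSet {x : ℕ → ℕ | jumps x m = j} := by
  have : {x : ℕ → ℕ | jumps x m = j} = ⋃ N : ℕ, ⋂ M : ℕ, ⋂ _ : N ≤ M, {x | jumpCount m M x = j} := by
    ext x
    simp only [Set.mem_setOf_eq, Set.mem_iUnion, Set.mem_iInter]
    exact jumps_eq_iff x m j
  rw [this]
  exact MeasurableSet.iUnion fun N => MeasurableSet.iInter fun M => MeasurableSet.iInter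
    fun _ => measurable_jumpCount m M (MeasurableSet.of_discrete (s := {j}))


lemma comap_measurable_self {Ω : Type*} (ξ : ℕ → Ω → ℕ) (i : ℕ) :
    @Measurable Ω ℕ (MeasurableSpace.comap (ξ i) inferInstance) _ (ξ i) :=
  Measurable.of_comap_le le_rfl

lemma measurable_sup_shiftSeq {Ω : Type*} (ξ : ℕ → Ω → ℕ) (s : ℕ) :
    @Measurable Ω (ℕ → ℕ) (⨆ i ∈ Set.Ioi s, MeasurableSpace.comap (ξ i) inferInstance) _
      (fun ω l => ξ (s + 1 + l) ω) := by
  letI m : MeasurableSpace Ω := ⨆ i ∈ Set.Ioi s, MeasurableSpace.comap (ξ i) inferInstance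
  apply measurable_pi_lambda
  intro l
  exact (comap_measurable_self ξ (s + 1 + l)).mono
    (le_biSup (f := fun i => MeasurableSpace.comap (ξ i) inferInstance)
      (by simp only [Set.mem_Ioi]; omega)) le_rfl

section prob
variable {Ω : Type*} [MeasurableSpace Ω] {μ : Measure Ω} [IsProbabilityMeasure μ]
variable {ξ : ℕ → Ω → ℕ}

lemma indep_head_tail (hmeas : ∀ i, Measurable (ξ i))
    (hindep : iIndepFun ξ μ) (s : ℕ) (K : Set ℕ) (B : Set Ω)
    (hB : MeasurableSet[⨆ i ∈ Set.Ioi s, MeasurableSpace.comap (ξ i) inferInstance] B) :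
    μ (ξ s ⁻¹' K ∩ B) = μ (ξ s ⁻¹' K) * μ B := by
  have h_le : ∀ i, MeasurableSpace.comap (ξ i) inferInstance ≤ _ := fun i => (hmeas i).comap_le
  have hST : Disjoint ({s} : Set ℕ) (Set.Ioi s) := by
    simp [Set.disjoint_left]
  have hIndep := indep_iSup_of_disjoint h_le hindep.iIndep hST
  have hA : MeasurableSet[⨆ i ∈ ({s} : Set ℕ), MeasurableSpace.comap (ξ i) inferInstance]
      (ξ s ⁻¹' K) := by
    have : MeasurableSet[MeasurableSpace.comap (ξ s) inferInstance] (ξ s ⁻¹' K) :=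
      ⟨K, MeasurableSet.of_discrete, rfl⟩
    exact (le_biSup (f := fun i => MeasurableSpace.comap (ξ i) inferInstance)
      (Set.mem_singleton s)) _ this
  exact ((indep_iff_forall_indepSet μ).1 hIndep _ _ hA hB).measure_inter_eq_mul

lemma measure_shift_event (hmeas : ∀ i, Measurable (ξ i))
    (hindep : iIndepFun ξ μ) (s : ℕ) (K : Set ℕ) (m j : ℕ) :
    μ (ξ s ⁻¹' K ∩ {ω | jumps (fun l => ξ (s + 1 + l) ω) m = j})
      = μ (ξ s ⁻¹' K) * μ {ω | jumps (fun l => ξ (s + 1 + l) ω) m = j} := by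
  apply indep_head_tail hmeas hindep
  exact (measurable_sup_shiftSeq ξ s) (measurableSet_jumps_eq m j)

lemma marginal_eq (hmeas : ∀ i, Measurable (ξ i))
    (hident : ∀ i, Measure.map (ξ i) μ = Measure.map (ξ 0) μ) (s : ℕ) (K : Set ℕ) :
    μ (ξ s ⁻¹' K) = μ (ξ 0 ⁻¹' K) := by
  have h1 := Measure.map_apply (μ := μ) (hmeas s) (MeasurableSet.of_discrete (s := K))
  have h2 := Measure.map_apply (μ := μ) (hmeas 0) (MeasurableSet.of_discrete (s := K))
  rw [← h1, ← h2, hident s]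

lemma meas_iInter_tail (hmeas : ∀ i, Measurable (ξ i))
    (hindep : iIndepFun ξ μ)
    (hident : ∀ i, Measure.map (ξ i) μ = Measure.map (ξ 0) μ) (s m L : ℕ) :
    μ (⋂ l ∈ Finset.range L, ξ (s + l) ⁻¹' (Set.Ici m)) = μ (ξ 0 ⁻¹' (Set.Ici m)) ^ L := by
  classical
  have hinj : Function.Injective (fun l => s + l) := fun a b h => by simpa using h
  have := hindep.meas_biInter (S := (Finset.range L).image (fun l => s + l))
    (s := fun i => ξ i ⁻¹' (Set.Ici m)) (fun i _ => ⟨Set.Ici m, MeasurableSet.of_discrete, rfl⟩)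
  have heq : (⋂ i ∈ (Finset.range L).image (fun l => s + l), ξ i ⁻¹' (Set.Ici m))
      = ⋂ l ∈ Finset.range L, ξ (s + l) ⁻¹' (Set.Ici m) := by
    ext ω
    simp only [Set.mem_iInter, Finset.mem_image, Finset.mem_range]
    constructor
    · intro h l hl; exact h (s + l) ⟨l, hl, rfl⟩
    · rintro h i ⟨l, hl, rfl⟩; exact h l hl
  rw [← heq, this, Finset.prod_image (fun a _ b _ h => hinj h)]
  rw [Finset.prod_congr rfl (fun l _ => marginal_eq hmeas hident (s + l) (Set.Ici m))]
  simp [Finset.prod_const]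

end prob

section core
variable {Ω : Type*} [MeasurableSpace Ω] {μ : Measure Ω} [IsProbabilityMeasure μ]
variable {ξ : ℕ → Ω → ℕ}

lemma shift_seq_eq (s : ℕ) (ω : Ω) :
    (fun i => (fun l => ξ (s + l) ω) (i + 1)) = fun l => ξ (s + 1 + l) ω := by
  funext i
  have : s + (i + 1) = s + 1 + i := by omega
  simp only [this]

/-- decomposition of the jump event according to the first variable -/
lemma event_decomp (hpos : ∀ i ω, 1 ≤ ξ i ω) (s m j : ℕ) (hm : 2 ≤ m) :
    {ω | jumps (fun l => ξ (s + l) ω) m = j + 1}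
      = (⋃ k ∈ Finset.Icc 1 (m - 1),
          (ξ s ⁻¹' {k} ∩ {ω | jumps (fun l => ξ (s + 1 + l) ω) (m - k) = j}))
        ∪ (ξ s ⁻¹' Set.Ici m ∩ {ω | jumps (fun l => ξ (s + 1 + l) ω) m = j + 1}) := by
  ext ω
  have hpos' : ∀ l, 1 ≤ (fun l => ξ (s + l) ω) l := fun l => hpos (s + l) ω
  have hx0 : (fun l => ξ (s + l) ω) 0 = ξ s ω := by simp
  simp only [Set.mem_setOf_eq, Set.mem_union, Set.mem_iUnion, Set.mem_inter_iff,
    Set.mem_preimage, Set.mem_singleton_iff, Set.mem_Ici, Finset.mem_Icc]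
  by_cases h0 : ξ s ω < m
  · rw [jumps_head_lt (fun l => ξ (s + l) ω) m hpos' (by omega), shift_seq_eq]
    simp only [Nat.add_zero]
    constructor
    · intro h
      exact Or.inl ⟨ξ s ω, ⟨⟨hpos s ω, by omega⟩, rfl, by omega⟩⟩
    · rintro (⟨k, ⟨⟨hk1, hk2⟩, rfl, hj⟩⟩ | ⟨hge, _⟩)
      · omega
      · omega
  · rw [jumps_head_ge (fun l => ξ (s + l) ω) m (by omega), shift_seq_eq]
    constructor
    · intro h
      exact Or.inr ⟨by omega, h⟩
    · rintro (⟨k, ⟨⟨hk1, hk2⟩, rfl, hj⟩⟩ | ⟨_, h⟩)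
      · omega
      · exact h

lemma measurable_shiftSeq (hmeas : ∀ i, Measurable (ξ i)) (s : ℕ) :
    Measurable (fun ω l => ξ (s + l) ω) :=
  measurable_pi_lambda _ fun l => hmeas (s + l)

lemma measurableSet_E (hmeas : ∀ i, Measurable (ξ i)) (s m j : ℕ) :
    MeasurableSet {ω | jumps (fun l => ξ (s + l) ω) m = j} :=
  measurable_shiftSeq hmeas s (measurableSet_jumps_eq m j)

lemma measurableSet_E' (hmeas : ∀ i, Measurable (ξ i)) (s m j : ℕ) :
    MeasurableSet {ω | jumps (fun l => ξ (s + 1 + l) ω) m = j} :=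
  measurable_shiftSeq hmeas (s + 1) (measurableSet_jumps_eq m j)

/-- measure recursion -/
lemma g_rec (hmeas : ∀ i, Measurable (ξ i)) (hpos : ∀ i ω, 1 ≤ ξ i ω)
    (hindep : iIndepFun ξ μ)
    (hident : ∀ i, Measure.map (ξ i) μ = Measure.map (ξ 0) μ) (s m j : ℕ) (hm : 2 ≤ m) :
    μ {ω | jumps (fun l => ξ (s + l) ω) m = j + 1}
      = (∑ k ∈ Finset.Icc 1 (m - 1),
          μ (ξ 0 ⁻¹' {k}) * μ {ω | jumps (fun l => ξ (s + 1 + l) ω) (m - k) = j})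
        + μ (ξ 0 ⁻¹' Set.Ici m) * μ {ω | jumps (fun l => ξ (s + 1 + l) ω) m = j + 1} := by
  rw [event_decomp hpos s m j hm]
  have hum : ∀ k, MeasurableSet (ξ s ⁻¹' {k} ∩ {ω | jumps (fun l => ξ (s + 1 + l) ω) (m - k) = j}) :=
    fun k => ((hmeas s) (MeasurableSet.of_discrete)).inter (measurableSet_E' hmeas s (m - k) j)
  have hBm : MeasurableSet (ξ s ⁻¹' Set.Ici m ∩ {ω | jumps (fun l => ξ (s + 1 + l) ω) m = j + 1}) :=
    ((hmeas s) (MeasurableSet.of_discrete)).inter (measurableSet_E' hmeas s m (j + 1))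
  rw [measure_union _ hBm]
  · rw [measure_biUnion_finset _ (fun k _ => hum k)]
    · congr 1
      · apply Finset.sum_congr rfl
        intro k hk
        rw [measure_shift_event hmeas hindep s {k} (m - k) j,
          marginal_eq hmeas hident s {k}]
      · rw [measure_shift_event hmeas hindep s (Set.Ici m) m (j + 1),
          marginal_eq hmeas hident s (Set.Ici m)]
    · -- pairwise disjoint
      intro a ha b hb hab
      apply Set.disjoint_left.2
      rintro ω ⟨ha', _⟩ ⟨hb', _⟩
      simp only [Set.mem_preimage, Set.mem_singleton_iff] at ha' hb'
      exact hab (ha' ▸ hb' ▸ rfl)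
  · -- disjoint union vs Ici part
    apply Set.disjoint_left.2
    rintro ω hω ⟨hge, _⟩
    simp only [Set.mem_iUnion, Finset.mem_Icc] at hω
    obtain ⟨k, ⟨hk1, hk2⟩, hmem⟩ := hω
    obtain ⟨hk, _⟩ := hmem
    simp only [Set.mem_preimage, Set.mem_singleton_iff] at hk
    simp only [Set.mem_preimage, Set.mem_Ici] at hge
    omega

/-- the zero-jump event has measure zero -/
lemma g_zero (hmeas : ∀ i, Measurable (ξ i)) (hpos : ∀ i ω, 1 ≤ ξ i ω)
    (hindep : iIndepFun ξ μ)
    (hident : ∀ i, Measure.map (ξ i) μ = Measure.map (ξ 0) μ)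
    (hμ1 : 0 < μ (ξ 0 ⁻¹' {1})) (s m : ℕ) (hm : 2 ≤ m) :
    μ {ω | jumps (fun l => ξ (s + l) ω) m = 0} = 0 := by
  have hr : μ (ξ 0 ⁻¹' Set.Ici m) < 1 := by
    have hdisj : Disjoint (ξ 0 ⁻¹' {1}) (ξ 0 ⁻¹' Set.Ici m) := by
      apply Set.disjoint_left.2
      intro ω h1 h2
      simp only [Set.mem_preimage, Set.mem_singleton_iff] at h1
      simp only [Set.mem_preimage, Set.mem_Ici] at h2
      omega
    have hle : μ (ξ 0 ⁻¹' {1}) + μ (ξ 0 ⁻¹' Set.Ici m) ≤ 1 := by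
      rw [← measure_union hdisj ((hmeas 0) MeasurableSet.of_discrete)]
      exact prob_le_one
    by_contra hge
    push_neg at hge
    have h2 : μ (ξ 0 ⁻¹' {1}) + 1 ≤ 1 := le_trans (add_le_add_right hge _) hle
    nth_rewrite 2 [show (1 : ENNReal) = 0 + 1 by simp] at h2
    have h3 := (ENNReal.add_le_add_iff_right (by simp)).1 h2
    simp only [nonpos_iff_eq_zero] at h3
    exact absurd h3 (ne_of_gt hμ1)
  have hsub : ∀ L, {ω | jumps (fun l => ξ (s + l) ω) m = 0}
      ⊆ ⋂ l ∈ Finset.range L, ξ (s + l) ⁻¹' (Set.Ici m) := by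
    intro L ω hω
    simp only [Set.mem_setOf_eq] at hω
    simp only [Set.mem_iInter, Set.mem_preimage, Set.mem_Ici]
    intro l _
    exact jumps_eq_zero_ge (fun l => ξ (s + l) ω) m (fun l => hpos (s + l) ω) hm hω l
  have hle : ∀ L, μ {ω | jumps (fun l => ξ (s + l) ω) m = 0} ≤ μ (ξ 0 ⁻¹' Set.Ici m) ^ L := by
    intro L
    calc μ {ω | jumps (fun l => ξ (s + l) ω) m = 0}
        ≤ μ (⋂ l ∈ Finset.range L, ξ (s + l) ⁻¹' (Set.Ici m)) := measure_mono (hsub L)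
      _ = μ (ξ 0 ⁻¹' Set.Ici m) ^ L := meas_iInter_tail hmeas hindep hident s m L
  have htends := ENNReal.tendsto_pow_atTop_nhds_zero_of_lt_one hr
  have := ge_of_tendsto' htends (fun L => hle L)
  exact le_antisymm this zero_le

end core

section shift
variable {Ω : Type*} [MeasurableSpace Ω] {μ : Measure Ω} [IsProbabilityMeasure μ]
variable {ξ : ℕ → Ω → ℕ}

lemma g_one (hpos : ∀ i ω, 1 ≤ ξ i ω) (s m j : ℕ) (hm : m ≤ 1) :
    μ {ω | jumps (fun l => ξ (s + l) ω) m = j} = if j = 0 then 1 else 0 := by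
  have hz : ∀ ω, jumps (fun l => ξ (s + l) ω) m = 0 :=
    fun ω => jumps_le_one _ m (fun l => hpos (s + l) ω) hm
  by_cases hj : j = 0
  · subst hj
    have huniv : {ω | jumps (fun l => ξ (s + l) ω) m = 0} = Set.univ := by
      ext ω; simp [hz ω]
    rw [if_pos rfl, huniv, measure_univ]
  · rw [if_neg hj]
    have : {ω | jumps (fun l => ξ (s + l) ω) m = j} = ∅ := by
      ext ω; simp only [Set.mem_setOf_eq, Set.mem_empty_iff_false, iff_false]
      rw [hz ω]; omega
    rw [this, measure_empty]

lemma g_shift (hmeas : ∀ i, Measurable (ξ i)) (hpos : ∀ i ω, 1 ≤ ξ i ω)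
    (hindep : iIndepFun ξ μ)
    (hident : ∀ i, Measure.map (ξ i) μ = Measure.map (ξ 0) μ)
    (hμ1 : 0 < μ (ξ 0 ⁻¹' {1})) :
    ∀ j m s, μ {ω | jumps (fun l => ξ (s + l) ω) m = j}
      = μ {ω | jumps (fun l => ξ (0 + l) ω) m = j} := by
  intro j
  induction j with
  | zero =>
    intro m s
    rcases le_or_gt m 1 with hm | hm
    · rw [g_one hpos s m 0 hm, g_one hpos 0 m 0 hm]
    · rw [g_zero hmeas hpos hindep hident hμ1 s m (by omega),
        g_zero hmeas hpos hindep hident hμ1 0 m (by omega)]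
  | succ j ih =>
    intro m s₀
    rcases le_or_gt m 1 with hm | hm
    · rw [g_one hpos s₀ m (j + 1) hm, g_one hpos 0 m (j + 1) hm]
    · have hm2 : 2 ≤ m := hm
      set r := μ (ξ 0 ⁻¹' Set.Ici m) with hr_def
      set C := ∑ k ∈ Finset.Icc 1 (m - 1),
        μ (ξ 0 ⁻¹' {k}) * μ {ω | jumps (fun l => ξ (0 + l) ω) (m - k) = j} with hC_def
      set a : ℕ → ENNReal := fun t => μ {ω | jumps (fun l => ξ (t + l) ω) m = j + 1} with ha_def
      have hrec : ∀ t, a t = C + r * a (t + 1) := by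
        intro t
        show μ _ = _
        rw [g_rec hmeas hpos hindep hident t m j hm2]
        congr 1
        apply Finset.sum_congr rfl
        intro k _
        rw [ih (m - k) (t + 1)]
      -- finiteness
      have haf : ∀ t, a t ≠ ⊤ := fun t => measure_ne_top μ _
      have hCf : C ≠ ⊤ := by
        have h1 : C ≤ a 0 := by rw [hrec 0]; exact le_self_add
        exact ne_top_of_le_ne_top (haf 0) h1
      have hrf : r ≠ ⊤ := measure_ne_top μ _
      -- real versions
      set b : ℕ → ℝ := fun t => (a t).toReal with hb_def
      set r' : ℝ := r.toReal with hr'_def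
      set C' : ℝ := C.toReal with hC'_def
      have hb : ∀ t, b t = C' + r' * b (t + 1) := by
        intro t
        show (a t).toReal = _
        rw [hrec t, ENNReal.toReal_add hCf (ENNReal.mul_ne_top hrf (haf (t + 1))),
          ENNReal.toReal_mul]
      have hble : ∀ t, b t ≤ 1 := by
        intro t
        show (a t).toReal ≤ 1
        rw [show (1 : ℝ) = (1 : ENNReal).toReal by simp]
        exact ENNReal.toReal_mono (by simp) prob_le_one
      have hbnn : ∀ t, 0 ≤ b t := fun t => ENNReal.toReal_nonneg
      have hr'nn : (0 : ℝ) ≤ r' := ENNReal.toReal_nonneg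
      have hr'lt : r' < 1 := by
        have hrlt : r < 1 := by
          have hdisj : Disjoint (ξ 0 ⁻¹' {1}) (ξ 0 ⁻¹' Set.Ici m) := by
            apply Set.disjoint_left.2
            intro ω h1 h2
            simp only [Set.mem_preimage, Set.mem_singleton_iff] at h1
            simp only [Set.mem_preimage, Set.mem_Ici] at h2
            omega
          have hle : μ (ξ 0 ⁻¹' {1}) + μ (ξ 0 ⁻¹' Set.Ici m) ≤ 1 := by
            rw [← measure_union hdisj ((hmeas 0) MeasurableSet.of_discrete)]
            exact prob_le_one
          by_contra hge
          push_neg at hge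
          have h2 : μ (ξ 0 ⁻¹' {1}) + 1 ≤ 1 := le_trans (add_le_add_right hge _) hle
          nth_rewrite 2 [show (1 : ENNReal) = 0 + 1 by simp] at h2
          have h3 := (ENNReal.add_le_add_iff_right (by simp)).1 h2
          simp only [nonpos_iff_eq_zero] at h3
          exact absurd h3 (ne_of_gt hμ1)
        calc r' < (1 : ENNReal).toReal := (ENNReal.toReal_lt_toReal hrf (by simp)).2 hrlt
          _ = 1 := by simp
      have key : ∀ T t, |b t - b (t + 1)| ≤ r' ^ T := by
        intro T
        induction T with
        | zero =>
          intro t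
          rw [pow_zero]
          rw [abs_le]
          constructor
          · have h1 := hbnn t; have h2 := hble (t + 1); linarith
          · have h1 := hble t; have h2 := hbnn (t + 1); linarith
        | succ T ihT =>
          intro t
          have h1 : b t - b (t + 1) = r' * (b (t + 1) - b (t + 2)) := by
            rw [hb t, hb (t + 1)]; ring
          rw [h1, abs_mul, abs_of_nonneg hr'nn, pow_succ, mul_comm (r' ^ T) r']
          exact mul_le_mul_of_nonneg_left (ihT (t + 1)) hr'nn
      have hstep : ∀ t, b t = b (t + 1) := by
        intro t
        have htends : Filter.Tendsto (fun T => r' ^ T) Filter.atTop (nhds 0) :=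
          tendsto_pow_atTop_nhds_zero_of_lt_one hr'nn hr'lt
        have h0 : |b t - b (t + 1)| ≤ 0 := ge_of_tendsto' htends (fun T => key T t)
        have := abs_nonneg (b t - b (t + 1))
        have : |b t - b (t + 1)| = 0 := le_antisymm h0 this
        rw [abs_eq_zero] at this
        linarith
      have hastep : ∀ t, a t = a (t + 1) := by
        intro t
        exact (ENNReal.toReal_eq_toReal_iff' (haf t) (haf (t + 1))).1 (hstep t)
      have : ∀ t, a t = a 0 := by
        intro t
        induction t with
        | zero => rfl
        | succ t iht => rw [← hastep t, iht]
      exact this s₀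

end shift

/-- For i.i.d. `ξ_i` with distribution `(p_k)` on ℕ, `p_1 > 0`, the jump count
`M_n` of the truncated walk satisfies `M_1 = 0` and, for `n ≥ 2`, the
distributional recursion `M_n =_d M_{n-I_n} + 1`, where
`ℙ{I_n = k} = p_k/(p_1 + ⋯ + p_{n-1})` and `I_n` is independent of the `M_j`
(formulated as a mixture identity for the law of `M_n`). -/
theorem jumps_recursion {Ω : Type*} [MeasurableSpace Ω] (μ : Measure Ω)
    [IsProbabilityMeasure μ] (ξ : ℕ → Ω → ℕ)
    (hmeas : ∀ i, Measurable (ξ i)) (hpos : ∀ i ω, 1 ≤ ξ i ω)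
    (hindep : iIndepFun ξ μ)
    (hident : ∀ i, Measure.map (ξ i) μ = Measure.map (ξ 0) μ)
    (p : ℕ → ℝ) (hp : ∀ k, p k = (μ {ω | ξ 0 ω = k}).toReal) (hp1 : 0 < p 1)
    (n : ℕ) (hn : 2 ≤ n) :
    (∀ ω, jumps (fun k => ξ k ω) 1 = 0) ∧
    μ {ω | jumps (fun k => ξ k ω) n = 0} = 0 ∧
    (∀ j : ℕ, μ {ω | jumps (fun k => ξ k ω) n = j + 1}
        = ∑ k ∈ Finset.Icc 1 (n - 1),
            ENNReal.ofReal (p k / ∑ i ∈ Finset.Icc 1 (n - 1), p i) *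
              μ {ω | jumps (fun l => ξ l ω) (n - k) = j}) := by
  have hμ1 : 0 < μ (ξ 0 ⁻¹' {1}) := by
    have h := hp1
    rw [hp 1] at h
    have hne : μ {ω | ξ 0 ω = 1} ≠ 0 := by
      intro h0; rw [h0] at h; simp at h
    exact pos_iff_ne_zero.2 hne
  refine ⟨?_, ?_, ?_⟩
  · intro ω
    exact jumps_le_one _ 1 (fun l => hpos l ω) le_rfl
  · have hconv : {ω | jumps (fun k => ξ k ω) n = 0}
        = {ω | jumps (fun l => ξ (0 + l) ω) n = 0} := by
      ext ω; simp only [Set.mem_setOf_eq, Nat.zero_add]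
    rw [hconv]
    exact g_zero hmeas hpos hindep hident hμ1 0 n hn
  · intro j
    have hIio : ξ 0 ⁻¹' (Set.Iio n) = ⋃ k ∈ Finset.Icc 1 (n - 1), ξ 0 ⁻¹' {k} := by
      ext ω
      simp only [Set.mem_preimage, Set.mem_Iio, Set.mem_iUnion, Finset.mem_Icc,
        Set.mem_singleton_iff]
      constructor
      · intro h
        exact ⟨ξ 0 ω, ⟨⟨hpos 0 ω, by omega⟩, rfl⟩⟩
      · rintro ⟨k, ⟨⟨h1, h2⟩, rfl⟩⟩; omega
    have hqIio : μ (ξ 0 ⁻¹' (Set.Iio n)) = ∑ k ∈ Finset.Icc 1 (n - 1), μ (ξ 0 ⁻¹' {k}) := by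
      rw [hIio, measure_biUnion_finset]
      · intro a _ b _ hab
        apply Set.disjoint_left.2
        rintro ω ha' hb'
        simp only [Set.mem_preimage, Set.mem_singleton_iff] at ha' hb'
        exact hab (ha' ▸ hb' ▸ rfl)
      · exact fun k _ => (hmeas 0) MeasurableSet.of_discrete
    have hqr : (∑ k ∈ Finset.Icc 1 (n - 1), μ (ξ 0 ⁻¹' {k})) + μ (ξ 0 ⁻¹' Set.Ici n) = 1 := by
      rw [← hqIio]
      have hcompl : ξ 0 ⁻¹' Set.Ici n = (ξ 0 ⁻¹' Set.Iio n)ᶜ := by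
        rw [← Set.preimage_compl, Set.compl_Iio]
      rw [hcompl]
      exact prob_add_prob_compl ((hmeas 0) MeasurableSet.of_discrete)
    have hq0 : (∑ k ∈ Finset.Icc 1 (n - 1), μ (ξ 0 ⁻¹' {k})) ≠ 0 := by
      intro h0
      have h1 : μ (ξ 0 ⁻¹' {1}) ≤ ∑ k ∈ Finset.Icc 1 (n - 1), μ (ξ 0 ⁻¹' {k}) :=
        Finset.single_le_sum (f := fun k => μ (ξ 0 ⁻¹' {k})) (fun i _ => zero_le)
          (Finset.mem_Icc.2 ⟨le_rfl, by omega⟩)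
      rw [h0] at h1
      simp only [nonpos_iff_eq_zero] at h1
      exact absurd h1 (ne_of_gt hμ1)
    have hqt : (∑ k ∈ Finset.Icc 1 (n - 1), μ (ξ 0 ⁻¹' {k})) ≠ ⊤ := by
      rw [← hqIio]; exact measure_ne_top μ _
    have hrf : μ (ξ 0 ⁻¹' Set.Ici n) ≠ ⊤ := measure_ne_top μ _
    have hAf : μ {ω | jumps (fun l => ξ (0 + l) ω) n = j + 1} ≠ ⊤ := measure_ne_top μ _
    have hrec : μ {ω | jumps (fun l => ξ (0 + l) ω) n = j + 1}
        = (∑ k ∈ Finset.Icc 1 (n - 1),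
            μ (ξ 0 ⁻¹' {k}) * μ {ω | jumps (fun l => ξ (0 + l) ω) (n - k) = j})
          + μ (ξ 0 ⁻¹' Set.Ici n) * μ {ω | jumps (fun l => ξ (0 + l) ω) n = j + 1} := by
      conv_lhs => rw [g_rec hmeas hpos hindep hident 0 n j hn]
      congr 1
      · exact Finset.sum_congr rfl fun k _ => by
          rw [g_shift hmeas hpos hindep hident hμ1 j (n - k) (0 + 1)]
      · rw [g_shift hmeas hpos hindep hident hμ1 (j + 1) n (0 + 1)]
    have hqa : (∑ k ∈ Finset.Icc 1 (n - 1), μ (ξ 0 ⁻¹' {k}))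
          * μ {ω | jumps (fun l => ξ (0 + l) ω) n = j + 1}
        = ∑ k ∈ Finset.Icc 1 (n - 1),
            μ (ξ 0 ⁻¹' {k}) * μ {ω | jumps (fun l => ξ (0 + l) ω) (n - k) = j} := by
      have h4 : (∑ k ∈ Finset.Icc 1 (n - 1), μ (ξ 0 ⁻¹' {k}))
            * μ {ω | jumps (fun l => ξ (0 + l) ω) n = j + 1}
          + μ (ξ 0 ⁻¹' Set.Ici n) * μ {ω | jumps (fun l => ξ (0 + l) ω) n = j + 1}
          = (∑ k ∈ Finset.Icc 1 (n - 1),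
              μ (ξ 0 ⁻¹' {k}) * μ {ω | jumps (fun l => ξ (0 + l) ω) (n - k) = j})
            + μ (ξ 0 ⁻¹' Set.Ici n) * μ {ω | jumps (fun l => ξ (0 + l) ω) n = j + 1} := by
        rw [← add_mul, hqr, one_mul, ← hrec]
      exact (ENNReal.add_left_inj (ENNReal.mul_ne_top hrf hAf)).1 h4
    have hA_eq : μ {ω | jumps (fun l => ξ (0 + l) ω) n = j + 1}
        = ∑ k ∈ Finset.Icc 1 (n - 1),
            (μ (ξ 0 ⁻¹' {k}) / (∑ i ∈ Finset.Icc 1 (n - 1), μ (ξ 0 ⁻¹' {i})))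
              * μ {ω | jumps (fun l => ξ (0 + l) ω) (n - k) = j} := by
      have h5 : (∑ i ∈ Finset.Icc 1 (n - 1), μ (ξ 0 ⁻¹' {i}))⁻¹
            * ((∑ k ∈ Finset.Icc 1 (n - 1), μ (ξ 0 ⁻¹' {k}))
              * μ {ω | jumps (fun l => ξ (0 + l) ω) n = j + 1})
          = (∑ i ∈ Finset.Icc 1 (n - 1), μ (ξ 0 ⁻¹' {i}))⁻¹
            * ∑ k ∈ Finset.Icc 1 (n - 1),
                μ (ξ 0 ⁻¹' {k}) * μ {ω | jumps (fun l => ξ (0 + l) ω) (n - k) = j} := by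
        rw [hqa]
      rw [← mul_assoc, ENNReal.inv_mul_cancel hq0 hqt, one_mul] at h5
      rw [h5, Finset.mul_sum]
      exact Finset.sum_congr rfl fun k _ => by
        rw [ENNReal.div_eq_inv_mul, mul_assoc]
    have hcoef : ∀ k, ENNReal.ofReal (p k / ∑ i ∈ Finset.Icc 1 (n - 1), p i)
        = μ (ξ 0 ⁻¹' {k}) / (∑ i ∈ Finset.Icc 1 (n - 1), μ (ξ 0 ⁻¹' {i})) := by
      intro k
      have hsum : ∑ i ∈ Finset.Icc 1 (n - 1), p i
          = (∑ i ∈ Finset.Icc 1 (n - 1), μ (ξ 0 ⁻¹' {i})).toReal := by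
        rw [ENNReal.toReal_sum (fun i _ => measure_ne_top μ _)]
        exact Finset.sum_congr rfl fun i _ => hp i
      rw [hsum, hp k, ← ENNReal.toReal_div,
        ENNReal.ofReal_toReal (ENNReal.div_lt_top (measure_ne_top μ _) hq0).ne]
      rfl
    have hgoalL : {ω | jumps (fun k => ξ k ω) n = j + 1}
        = {ω | jumps (fun l => ξ (0 + l) ω) n = j + 1} := by
      ext ω; simp only [Set.mem_setOf_eq, Nat.zero_add]
    have hgoalR : ∀ k, μ {ω | jumps (fun l => ξ l ω) (n - k) = j}
        = μ {ω | jumps (fun l => ξ (0 + l) ω) (n - k) = j} := by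
      intro k
      congr 1
      ext ω; simp only [Set.mem_setOf_eq, Nat.zero_add]
    rw [hgoalL, hA_eq]
    exact Finset.sum_congr rfl fun k _ => by rw [hcoef k, hgoalR k]
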